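/- Let P₁,…,P_r ∈ ℝ^L and Q₁,…,Q_r ∈ ℝ^K each be linearly independent families, σ_i > 0, and Y = Σ_{i=1}^r σ_i P_i Q_iᵀ. For arbitrary positive reals μ_i, ν_i define σ̃_i = σ_i/(μ_i ν_i), P̃_i = μ_i P_i, Q̃_i = ν_i Q_i, P̃ = [P̃₁:…:P̃_r], Q̃ = [Q̃₁:…:Q̃_r], L̃ = (P̃^†)ᵀ P̃^† and R̃ = (Q̃^†)ᵀ Q̃^†. Then Y = Σ_{i=1}^r σ̃_i P̃_i Q̃_iᵀ, the family {P̃_i} is L̃-orthonormal and the family {Q̃_i} is R̃-orthonormal; thus the rescaled decomposition is an (L̃,R̃)-SVD of Y with prescribed values σ̃_i. -/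

import Mathlib

open Matrix

lemma aux_ortho {n r : ℕ} (V : Fin r → Fin n → ℝ) (hV : LinearIndependent ℝ V)
    (M : Matrix (Fin n) (Fin r) ℝ) (hM : ∀ a i, M a i = V i a)
    (D : Matrix (Fin r) (Fin n) ℝ) (h1 : M * D * M = M) :
    ∀ i j, V i ⬝ᵥ ((Dᵀ * D) *ᵥ V j) = if i = j then (1 : ℝ) else 0 := by
  have hMe : ∀ j, M *ᵥ Pi.single j 1 = V j := by
    intro j; funext a
    simp [mulVec, dotProduct, Pi.single_apply, hM]
  have hinj : ∀ x : Fin r → ℝ, M *ᵥ x = 0 → x = 0 := by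
    intro x hx
    have hrep : ∑ i, x i • V i = 0 := by
      funext a
      have := congrFun hx a
      simpa [mulVec, dotProduct, hM, Finset.sum_apply, mul_comm] using this
    funext i
    exact Fintype.linearIndependent_iff.mp hV x hrep i
  have hcol : ∀ j, D *ᵥ V j = Pi.single j 1 := by
    intro j
    have h0 : M *ᵥ (D *ᵥ V j - Pi.single j 1) = 0 := by
      have : M *ᵥ (D *ᵥ V j) = V j := by
        rw [← hMe j, mulVec_mulVec, mulVec_mulVec, h1]
      rw [mulVec_sub, this, hMe, sub_self]
    have := hinj _ h0
    exact sub_eq_zero.mp (by simpa using this)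
  intro i j
  rw [← mulVec_mulVec]
  rw [hcol j, mulVec_transpose]
  rw [dotProduct_comm, ← dotProduct_mulVec, hcol i]
  simp [Pi.single_apply, dotProduct, eq_comm]

/-- Proposition 4 of the paper: rescaling the factors of an oblique SVD
`Y = ∑ σᵢ Pᵢ Qᵢᵀ` by positive `μᵢ`, `νᵢ` gives `Y = ∑ σ̃ᵢ P̃ᵢ Q̃ᵢᵀ` with
`σ̃ᵢ = σᵢ/(μᵢνᵢ)`, `P̃ᵢ = μᵢPᵢ`, `Q̃ᵢ = νᵢQᵢ`, and this is an
`(L̃,R̃)`-SVD for `L̃ = (P̃†)ᵀP̃†`, `R̃ = (Q̃†)ᵀQ̃†` (pseudoinverses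
characterized by the four Penrose conditions): the rescaled families are
`L̃`- resp. `R̃`-orthonormal. -/
theorem rescaled_oblique_SVD (Lp Kp r : ℕ)
    (P : Fin r → Fin Lp → ℝ) (Q : Fin r → Fin Kp → ℝ)
    (hPind : LinearIndependent ℝ P) (hQind : LinearIndependent ℝ Q)
    (σ : Fin r → ℝ) (hσ : ∀ i, 0 < σ i)
    (Y : Matrix (Fin Lp) (Fin Kp) ℝ)
    (hY : Y = ∑ i, σ i • vecMulVec (P i) (Q i))
    (μ ν : Fin r → ℝ) (hμ : ∀ i, 0 < μ i) (hν : ∀ i, 0 < ν i)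
    (σt : Fin r → ℝ) (hσt : ∀ i, σt i = σ i / (μ i * ν i))
    (Pt : Fin r → Fin Lp → ℝ) (hPt : ∀ i, Pt i = μ i • P i)
    (Qt : Fin r → Fin Kp → ℝ) (hQt : ∀ i, Qt i = ν i • Q i)
    (Ptmat : Matrix (Fin Lp) (Fin r) ℝ) (hPtmat : ∀ m i, Ptmat m i = Pt i m)
    (Qtmat : Matrix (Fin Kp) (Fin r) ℝ) (hQtmat : ∀ m i, Qtmat m i = Qt i m)
    (Ptd : Matrix (Fin r) (Fin Lp) ℝ)
    (hPtd1 : Ptmat * Ptd * Ptmat = Ptmat) (hPtd2 : Ptd * Ptmat * Ptd = Ptd)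
    (hPtd3 : (Ptmat * Ptd)ᵀ = Ptmat * Ptd) (hPtd4 : (Ptd * Ptmat)ᵀ = Ptd * Ptmat)
    (Qtd : Matrix (Fin r) (Fin Kp) ℝ)
    (hQtd1 : Qtmat * Qtd * Qtmat = Qtmat) (hQtd2 : Qtd * Qtmat * Qtd = Qtd)
    (hQtd3 : (Qtmat * Qtd)ᵀ = Qtmat * Qtd) (hQtd4 : (Qtd * Qtmat)ᵀ = Qtd * Qtmat)
    (Lt : Matrix (Fin Lp) (Fin Lp) ℝ) (hLt : Lt = Ptdᵀ * Ptd)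
    (Rt : Matrix (Fin Kp) (Fin Kp) ℝ) (hRt : Rt = Qtdᵀ * Qtd) :
    Y = ∑ i, σt i • vecMulVec (Pt i) (Qt i) ∧
    (∀ i j, Pt i ⬝ᵥ (Lt *ᵥ Pt j) = if i = j then (1 : ℝ) else 0) ∧
    (∀ i j, Qt i ⬝ᵥ (Rt *ᵥ Qt j) = if i = j then (1 : ℝ) else 0) := by
  have hPtind : LinearIndependent ℝ Pt := by
    have h := hPind.units_smul (fun i => Units.mk0 (μ i) (hμ i).ne')
    have : Pt = (fun i => Units.mk0 (μ i) (hμ i).ne') • P := by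
      funext i; simp [hPt, Pi.smul_apply']
    rwa [this]
  have hQtind : LinearIndependent ℝ Qt := by
    have h := hQind.units_smul (fun i => Units.mk0 (ν i) (hν i).ne')
    have : Qt = (fun i => Units.mk0 (ν i) (hν i).ne') • Q := by
      funext i; simp [hQt, Pi.smul_apply']
    rwa [this]
  refine ⟨?_, ?_, ?_⟩
  · rw [hY]
    refine Finset.sum_congr rfl fun i _ => ?_
    have hμν : μ i * ν i ≠ 0 := (mul_pos (hμ i) (hν i)).ne'
    ext m k
    simp only [hσt, hPt, hQt, Pi.smul_apply, smul_eq_mul, vecMulVec_apply]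
    field_simp
    simp only [Matrix.smul_apply, vecMulVec_apply, Pi.smul_apply, smul_eq_mul]
    field_simp
    rw [mul_assoc (σ i * P i m * Q i k) (μ i) (ν i), mul_div_assoc, div_self hμν, mul_one]
  · rw [hLt]
    exact aux_ortho Pt hPtind Ptmat hPtmat Ptd hPtd1
  · rw [hRt]
    exact aux_ortho Qt hQtind Qtmat hQtmat Qtd hQtd1
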